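/- Let q ∈ ℂ with q ≠ 0 and qᵏ ≠ 1 for every integer k ≥ 1, and let m ≥ 1. Set μ_i := q^{−2(m−i)} for 1 ≤ i ≤ m. Then the second-kind multiplicities satisfy d̃_1(μ) = q^m · m_q and d̃_i(μ) = 0 for every 2 ≤ i ≤ m, and consequently for every n ≥ 1: Σ_{i=1}^{m} (q⁻² μ_i)ⁿ d̃_i(μ) = q^{m(1−2n)} · m_q. -/

import Mathlib

open Finset

private lemma tele11 (q : ℂ) (hqk : ∀ k : ℕ, 1 ≤ k → q ^ k ≠ 1) (n : ℕ) :
    ∏ k ∈ Finset.range n, (1 - q ^ (2 * k + 4)) / (1 - q ^ (2 * k + 2))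
      = (1 - q ^ (2 * n + 2)) / (1 - q ^ 2) := by
  have h2 : (1 : ℂ) - q ^ 2 ≠ 0 := fun h => hqk 2 (by omega) (by linear_combination -h)
  induction n with
  | zero => norm_num [div_self h2]
  | succ n ih =>
    have h1 : (1 : ℂ) - q ^ (2 * n + 2) ≠ 0 :=
      fun h => hqk (2 * n + 2) (by omega) (by linear_combination -h)
    rw [Finset.prod_range_succ, ih]
    field_simp
    ring

/-- for the "vacuum" spectrum `μᵢ = q^{−2(m−i)}` (1-based `i`; here `i`-th
entry of `Fin m` corresponds to `i+1`), the second-kind multiplicities satisfy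
`d̃₁ = q^m·m_q`, `d̃ᵢ = 0` for `i ≥ 2`, and `Σᵢ (q⁻²μᵢ)ⁿ d̃ᵢ = q^{m(1−2n)}·m_q`. -/
theorem stmt_11 (q : ℂ) (hq : q ≠ 0) (hqk : ∀ k : ℕ, 1 ≤ k → q ^ k ≠ 1)
    (m : ℕ) (hm : 1 ≤ m) (μ : Fin m → ℂ)
    (hμ : ∀ i : Fin m, μ i = q ^ (-(2 * ((m : ℤ) - ((i : ℕ) + 1)))))
    (d : Fin m → ℂ)
    (hd : ∀ i : Fin m, d i = q * ∏ j ∈ univ.erase i, (μ i - q ^ 2 * μ j) / (μ i - μ j))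
    (mq : ℂ) (hmq : mq = (q ^ (m : ℤ) - q ^ (-(m : ℤ))) / (q - q⁻¹)) :
    d ⟨0, by omega⟩ = q ^ (m : ℕ) * mq ∧
    (∀ i : Fin m, 1 ≤ (i : ℕ) → d i = 0) ∧
    (∀ n : ℕ, 1 ≤ n →
      ∑ i, (q⁻¹ ^ 2 * μ i) ^ n * d i = q ^ ((m : ℤ) * (1 - 2 * (n : ℤ))) * mq) := by
  obtain ⟨M, rfl⟩ : ∃ M, m = M + 1 := ⟨m - 1, by omega⟩
  set i0 : Fin (M + 1) := ⟨0, by omega⟩ with hi0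
  have hμ' : ∀ i : Fin (M + 1), μ i = q ^ (2 * ((i : ℕ) : ℤ) - 2 * (M : ℤ)) := by
    intro i
    rw [hμ i]
    congr 1
    push_cast
    ring
  have h0 : μ i0 = q ^ (-(2 * (M : ℤ))) := by
    rw [hμ' i0]
    norm_num [hi0]
  have h2 : (1 : ℂ) - q ^ 2 ≠ 0 := fun h => hqk 2 (by omega) (by linear_combination -h)
  -- Part 2 : vanishing for i ≥ 1
  have part2 : ∀ i : Fin (M + 1), 1 ≤ (i : ℕ) → d i = 0 := by
    intro i hi
    rw [hd i]
    have hjlt : (i : ℕ) - 1 < M + 1 := by omega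
    set j : Fin (M + 1) := ⟨(i : ℕ) - 1, hjlt⟩ with hj
    have hjmem : j ∈ (univ : Finset (Fin (M + 1))).erase i := by
      simp only [Finset.mem_erase, Finset.mem_univ, and_true, Ne, Fin.ext_iff, hj]
      omega
    have hzero : (μ i - q ^ 2 * μ j) / (μ i - μ j) = 0 := by
      have hnum : μ i - q ^ 2 * μ j = 0 := by
        rw [hμ' i, hμ' j]
        have hcast : (((i : ℕ) - 1 : ℕ) : ℤ) = ((i : ℕ) : ℤ) - 1 := by
          push_cast [hi]; ring
        rw [sub_eq_zero, ← zpow_natCast q 2, ← zpow_add₀ hq]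
        congr 1
        simp only [hj]
        rw [hcast]
        push_cast
        ring
      rw [hnum, zero_div]
    rw [Finset.prod_eq_zero hjmem hzero, mul_zero]
  -- Part 1 : the value of d i0
  have himg : (univ : Finset (Fin M)).image Fin.succ
      = (univ : Finset (Fin (M + 1))).erase i0 := by
    ext j
    simp only [Finset.mem_image, Finset.mem_erase, Finset.mem_univ, and_true, true_and]
    constructor
    · rintro ⟨k, rfl⟩
      simp [hi0, Fin.ext_iff, Fin.val_succ]
    · intro hj
      have hjv : 1 ≤ (j : ℕ) := by
        rcases Nat.eq_zero_or_pos (j : ℕ) with h | h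
        · exact absurd (Fin.ext (by simp [hi0, h])) hj
        · exact h
      refine ⟨⟨(j : ℕ) - 1, by omega⟩, ?_⟩
      apply Fin.ext
      simp only [Fin.val_succ]
      omega
  have hfactor : ∀ k : Fin M, (μ i0 - q ^ 2 * μ k.succ) / (μ i0 - μ k.succ)
      = (1 - q ^ (2 * (k : ℕ) + 4)) / (1 - q ^ (2 * (k : ℕ) + 2)) := by
    intro k
    have hvs : ((k.succ : Fin (M + 1)) : ℕ) = (k : ℕ) + 1 := Fin.val_succ k
    have e1 : q ^ 2 * μ k.succ = q ^ (-(2 * (M : ℤ))) * q ^ (2 * (k : ℕ) + 4) := by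
      rw [hμ' k.succ, ← zpow_natCast q 2, ← zpow_natCast q (2 * (k : ℕ) + 4),
        ← zpow_add₀ hq, ← zpow_add₀ hq]
      congr 1
      rw [hvs]
      push_cast
      ring
    have e2 : μ k.succ = q ^ (-(2 * (M : ℤ))) * q ^ (2 * (k : ℕ) + 2) := by
      rw [hμ' k.succ, ← zpow_natCast q (2 * (k : ℕ) + 2), ← zpow_add₀ hq]
      congr 1
      rw [hvs]
      push_cast
      ring
    have hz : q ^ (-(2 * (M : ℤ))) ≠ 0 := zpow_ne_zero _ hq
    rw [h0, e1, e2,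
      show q ^ (-(2 * (M : ℤ))) - q ^ (-(2 * (M : ℤ))) * q ^ (2 * (k : ℕ) + 4)
        = q ^ (-(2 * (M : ℤ))) * (1 - q ^ (2 * (k : ℕ) + 4)) by ring,
      show q ^ (-(2 * (M : ℤ))) - q ^ (-(2 * (M : ℤ))) * q ^ (2 * (k : ℕ) + 2)
        = q ^ (-(2 * (M : ℤ))) * (1 - q ^ (2 * (k : ℕ) + 2)) by ring,
      mul_div_mul_left _ _ hz]
  have hprod : ∏ j ∈ (univ : Finset (Fin (M + 1))).erase i0,
      (μ i0 - q ^ 2 * μ j) / (μ i0 - μ j) = (1 - q ^ (2 * M + 2)) / (1 - q ^ 2) := by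
    rw [← himg, Finset.prod_image (fun a _ b _ h => Fin.succ_injective _ h)]
    calc ∏ k : Fin M, (μ i0 - q ^ 2 * μ k.succ) / (μ i0 - μ k.succ)
        = ∏ k : Fin M, (1 - q ^ (2 * (k : ℕ) + 4)) / (1 - q ^ (2 * (k : ℕ) + 2)) := by
          exact Finset.prod_congr rfl fun k _ => hfactor k
      _ = ∏ k ∈ Finset.range M, (1 - q ^ (2 * k + 4)) / (1 - q ^ (2 * k + 2)) :=
          Fin.prod_univ_eq_prod_range (fun k => (1 - q ^ (2 * k + 4)) / (1 - q ^ (2 * k + 2))) M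
      _ = (1 - q ^ (2 * M + 2)) / (1 - q ^ 2) := tele11 q hqk M
  have hqinv : q - q⁻¹ ≠ 0 := by
    intro h
    apply hqk 2 (by omega)
    have := sub_eq_zero.mp h
    field_simp at this
    linear_combination this
  have hp : q ^ (M + 1 : ℕ) ≠ 0 := pow_ne_zero _ hq
  have part1 : d i0 = q ^ (M + 1 : ℕ) * mq := by
    have hzm : q ^ (((M + 1 : ℕ)) : ℤ) = q ^ (M + 1 : ℕ) := zpow_natCast q (M + 1)
    have hzm' : q ^ (-((M + 1 : ℕ) : ℤ)) = (q ^ (M + 1 : ℕ))⁻¹ := by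
      rw [zpow_neg, zpow_natCast]
    have hmqval : mq * (q - q⁻¹) = q ^ (M + 1 : ℕ) - (q ^ (M + 1 : ℕ))⁻¹ := by
      rw [hmq, div_mul_cancel₀ _ hqinv, hzm, hzm']
    apply mul_right_cancel₀ hqinv
    rw [hd i0, hprod, mul_assoc (q ^ (M + 1 : ℕ)) mq (q - q⁻¹), hmqval]
    field_simp [h2, hp]
    ring
  refine ⟨part1, part2, ?_⟩
  -- Part 3
  intro n hn
  have hsum : ∑ i, (q⁻¹ ^ 2 * μ i) ^ n * d i = (q⁻¹ ^ 2 * μ i0) ^ n * d i0 := by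
    apply Finset.sum_eq_single i0
    · intro b _ hb
      have hb1 : 1 ≤ (b : ℕ) := by
        rcases Nat.eq_zero_or_pos (b : ℕ) with h | h
        · exact absurd (Fin.ext (by simp [hi0, h])) hb
        · exact h
      rw [part2 b hb1, mul_zero]
    · intro h
      exact absurd (Finset.mem_univ i0) h
  rw [hsum, part1]
  have hbase : q⁻¹ ^ 2 * μ i0 = q ^ (-(2 * ((M : ℤ) + 1))) := by
    rw [h0, inv_pow, ← zpow_natCast q 2, ← zpow_neg, ← zpow_add₀ hq]
    congr 1
    push_cast
    ring
  rw [hbase, ← zpow_natCast (q ^ (-(2 * ((M : ℤ) + 1)))) n, ← zpow_mul,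
    ← zpow_natCast q (M + 1), ← mul_assoc, ← zpow_add₀ hq]
  congr 2
  push_cast
  ring
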